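/- Fix B > 0, τ ∈ (0,1], n > 0 and c > 0. Define the per-link OFDM Shannon capacity O(K) = (B/K²)·log(1 + τnK²/B) and the per-link CDMA Shannon capacity with logarithmically growing interference D(K) = B·log(1 + τn/(B + c·n·log K)) for integers K ≥ 2. Then lim_{K→∞} O(K)/D(K) = 0. That is, as the number K² of uncoordinated robot–computing-unit pairs grows, the capacity of a link using an individual频 spectral slice of width B/K² becomes negligible compared with that of a link spreading over the full spectrum B and treating the other users' signals as noise. -/

import Mathlib

open Real Filter

private lemma aux_log_lb {y : ℝ} (hy : 0 ≤ y) : y / (1 + y) ≤ Real.log (1 + y) := by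
  have h1 : (0:ℝ) < 1 + y := by linarith
  have h2 := Real.log_le_sub_one_of_pos (x := (1+y)⁻¹) (by positivity)
  rw [Real.log_inv] at h2
  have h3 : (1+y)⁻¹ - 1 = -(y/(1+y)) := by field_simp; ring
  linarith

/-- STATEMENT 14: fix B > 0, τ ∈ (0,1], n > 0, c > 0. With the per-link OFDM
Shannon capacity O(K) = (B/K²)·log(1 + τnK²/B) and the per-link CDMA Shannon
capacity D(K) = B·log(1 + τn/(B + c·n·log K)), one has O(K)/D(K) → 0 as
K → ∞: the OFDM spectral-slice capacity becomes negligible compared with the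
full-spectrum CDMA capacity. -/
theorem ofdm_negligible_vs_cdma (B τ n c : ℝ) (hB : 0 < B)
    (hτ : τ ∈ Set.Ioc (0 : ℝ) 1) (hn : 0 < n) (hc : 0 < c) :
    Filter.Tendsto
      (fun K : ℕ =>
        ((B / (K : ℝ) ^ 2) * Real.log (1 + τ * n * (K : ℝ) ^ 2 / B)) /
          (B * Real.log (1 + τ * n / (B + c * n * Real.log (K : ℝ)))))
      Filter.atTop (nhds 0) := by
  obtain ⟨hτ0, hτ1⟩ := hτ
  set a := τ * n with ha
  have ha0 : 0 < a := mul_pos hτ0 hn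
  set P := Real.log (1 + a / B) with hP
  have hP0 : 0 ≤ P := Real.log_nonneg (by
    have : (0:ℝ) ≤ a / B := by positivity
    linarith)
  -- the dominating function, written so that its limit is obvious
  set g : ℝ → ℝ := fun x => (1 / a) * ((P * x⁻¹ + 2 * (Real.log x / x)) *
      ((B + a) * x⁻¹ + c * n * (Real.log x / x))) with hg
  have hlogdiv : Tendsto (fun x : ℝ => Real.log x / x) atTop (nhds 0) := by
    have := Real.tendsto_pow_log_div_mul_add_atTop 1 0 1 one_ne_zero
    simpa using this
  have hinv : Tendsto (fun x : ℝ => x⁻¹) atTop (nhds 0) := tendsto_inv_atTop_zero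
  have hgt : Tendsto g atTop (nhds 0) := by
    have h1 : Tendsto (fun x : ℝ => P * x⁻¹ + 2 * (Real.log x / x)) atTop (nhds 0) := by
      have := (hinv.const_mul P).add (hlogdiv.const_mul 2)
      simpa using this
    have h2 : Tendsto (fun x : ℝ => (B + a) * x⁻¹ + c * n * (Real.log x / x)) atTop
        (nhds 0) := by
      have := (hinv.const_mul (B + a)).add (hlogdiv.const_mul (c * n))
      simpa using this
    have := (h1.mul h2).const_mul (1 / a)
    rw [hg]
    simpa [one_div] using this
  have hgN : Tendsto (fun K : ℕ => g (K : ℝ)) atTop (nhds 0) :=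
    hgt.comp tendsto_natCast_atTop_atTop
  refine tendsto_of_tendsto_of_tendsto_of_le_of_le' tendsto_const_nhds hgN ?_ ?_
  · -- nonnegativity
    filter_upwards [eventually_ge_atTop 1] with K hK
    have hK1 : (1:ℝ) ≤ (K:ℝ) := by exact_mod_cast hK
    have hKpos : (0:ℝ) < (K:ℝ) := by linarith
    have hL : 0 ≤ Real.log (K:ℝ) := Real.log_nonneg hK1
    have hden : (0:ℝ) < B + c * n * Real.log (K:ℝ) := by positivity
    apply div_nonneg
    · apply mul_nonneg (by positivity)
      apply Real.log_nonneg
      have : (0:ℝ) ≤ a * (K:ℝ)^2 / B := by positivity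
      linarith
    · apply mul_nonneg hB.le
      apply Real.log_nonneg
      have : (0:ℝ) ≤ a / (B + c * n * Real.log (K:ℝ)) := by positivity
      linarith
  · -- upper bound by g
    filter_upwards [eventually_ge_atTop 1] with K hK
    have hK1 : (1:ℝ) ≤ (K:ℝ) := by exact_mod_cast hK
    have hKpos : (0:ℝ) < (K:ℝ) := by linarith
    set x : ℝ := (K:ℝ)
    set L : ℝ := Real.log x with hL
    have hL0 : 0 ≤ L := Real.log_nonneg hK1
    have hQ : (0:ℝ) < B + c * n * L := by positivity
    -- numerator bound
    have hnum : Real.log (1 + a * x ^ 2 / B) ≤ P + 2 * L := by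
      have hx2 : (1:ℝ) ≤ x ^ 2 := one_le_pow₀ hK1
      have harg : (0:ℝ) < 1 + a * x ^ 2 / B := by positivity
      have hle : 1 + a * x ^ 2 / B ≤ (1 + a / B) * x ^ 2 := by
        have : (1 + a / B) * x ^ 2 = x ^ 2 + a * x ^ 2 / B := by ring
        rw [this]; linarith
      calc Real.log (1 + a * x ^ 2 / B) ≤ Real.log ((1 + a / B) * x ^ 2) :=
            Real.log_le_log harg hle
        _ = P + 2 * L := by
            rw [Real.log_mul (by positivity) (by positivity), Real.log_pow]
            push_cast; rw [hP, hL]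
    -- denominator bound
    set y : ℝ := a / (B + c * n * L) with hy
    have hy0 : 0 < y := by positivity
    have hden : B * a / (B + a + c * n * L) ≤ B * Real.log (1 + y) := by
      have h1 := aux_log_lb hy0.le
      have h2 : y / (1 + y) = a / (B + a + c * n * L) := by
        rw [hy, div_eq_div_iff (by positivity) (by positivity)]
        field_simp
        all_goals ring
      rw [h2] at h1
      have := mul_le_mul_of_nonneg_left h1 hB.le
      calc B * a / (B + a + c * n * L) = B * (a / (B + a + c * n * L)) := by ring
        _ ≤ B * Real.log (1 + y) := this
    have hdpos : (0:ℝ) < B * a / (B + a + c * n * L) := by positivity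
    have hbound : (B / x ^ 2) * Real.log (1 + a * x ^ 2 / B) /
        (B * Real.log (1 + y)) ≤
        ((B / x ^ 2) * (P + 2 * L)) / (B * a / (B + a + c * n * L)) := by
      apply div_le_div₀ (by positivity)
        (mul_le_mul_of_nonneg_left hnum (by positivity)) hdpos hden
    have heq : ((B / x ^ 2) * (P + 2 * L)) / (B * a / (B + a + c * n * L)) = g x := by
      rw [hg]
      have hx0 : x ≠ 0 := hKpos.ne'
      field_simp
      ring
    calc (B / x ^ 2) * Real.log (1 + a * x ^ 2 / B) / (B * Real.log (1 + y))
        ≤ ((B / x ^ 2) * (P + 2 * L)) / (B * a / (B + a + c * n * L)) := hbound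
      _ = g x := heq
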